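/- arXiv:1003.5070 — 5 statements merged into one kernel-verified Lean document; each statement's English description precedes it below -/
import Mathlib

section
/- Let θ be a formal power series in ℂ[[a]] with θ(0) = 0 and θ'(0) ≠ 0, in an algebra where a*b = b*a + b^2 holds and b-adic/a-adic completeness is available. Then setting α := θ(a) and β := b·θ'(a), one has α*β - β*α = β^2. -/
open PowerSeries in
/-- Let `θ ∈ ℂ[[a]]` with `θ(0) = 0`, `θ'(0) ≠ 0`, acting in an algebra `Â` (here
axiomatized: `Φ T` is the element `T(a)`, and the commutation rule
`T(a)*b = b*T(a) + b*T'(a)*b` holds for every formal power series `T`).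
Then `α := θ(a)` and `β := b·θ'(a)` satisfy `α*β - β*α = β^2`. -/
theorem stmt2 {A : Type*} [Ring A] [Algebra ℂ A]
    (Φ : PowerSeries ℂ →ₐ[ℂ] A) (b : A) (θ : PowerSeries ℂ)
    (hθ0 : constantCoeff θ = 0) (hθ1 : coeff 1 θ ≠ 0)
    (hrel : ∀ T : PowerSeries ℂ, Φ T * b = b * Φ T + b * Φ (d⁄dX ℂ T) * b) :
    Φ θ * (b * Φ (d⁄dX ℂ θ)) - (b * Φ (d⁄dX ℂ θ)) * Φ θ
      = (b * Φ (d⁄dX ℂ θ)) * (b * Φ (d⁄dX ℂ θ)) := by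
  have h := hrel θ
  have hc : Φ (d⁄dX ℂ θ) * Φ θ = Φ θ * Φ (d⁄dX ℂ θ) := by
    rw [← map_mul, ← map_mul, mul_comm]
  calc Φ θ * (b * Φ (d⁄dX ℂ θ)) - (b * Φ (d⁄dX ℂ θ)) * Φ θ
      = (Φ θ * b) * Φ (d⁄dX ℂ θ) - b * (Φ (d⁄dX ℂ θ) * Φ θ) := by noncomm_ring
    _ = (b * Φ θ + b * Φ (d⁄dX ℂ θ) * b) * Φ (d⁄dX ℂ θ)
        - b * (Φ θ * Φ (d⁄dX ℂ θ)) := by rw [h, hc]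
    _ = (b * Φ (d⁄dX ℂ θ)) * (b * Φ (d⁄dX ℂ θ)) := by noncomm_ring
end

section
/- In the completed algebra Â, for any formal power series T ∈ ℂ[[x]], one has T(a)·b = b·T(a) + b·T'(a)·b, where T' is the formal derivative of T. -/
open PowerSeries in
private lemma stmt3_aux {A : Type*} [Ring A] (a b t d : A)
    (hrel : a * b = b * a + b * b) (ih : t * b = b * t + b * d * b) :
    (a * t) * b = b * (a * t) + b * (a * d + t) * b := by
  calc (a * t) * b = a * (b * t + b * d * b) := by rw [mul_assoc, ih]
    _ = (a * b) * t + (a * b) * (d * b) := by noncomm_ring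
    _ = (b * a + b * b) * t + (b * a + b * b) * (d * b) := by rw [hrel]
    _ = b * (a * t) + b * (b * t + b * d * b) + b * (a * d) * b := by noncomm_ring
    _ = b * (a * t) + b * (t * b) + b * (a * d) * b := by rw [← ih]
    _ = b * (a * t) + b * (a * d + t) * b := by noncomm_ring

open PowerSeries in
private lemma stmt3_poly {A : Type*} [Ring A] [Algebra ℂ A]
    (Φ : PowerSeries ℂ →ₐ[ℂ] A) (b : A)
    (hrel : Φ X * b = b * Φ X + b * b) (P : Polynomial ℂ) :
    Φ (P : PowerSeries ℂ) * b = b * Φ (P : PowerSeries ℂ)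
      + b * Φ (d⁄dX ℂ (P : PowerSeries ℂ)) * b := by
  induction P using Polynomial.induction_on with
  | C c =>
      have h1 : ((Polynomial.C c : Polynomial ℂ) : PowerSeries ℂ) = algebraMap ℂ ℂ⟦X⟧ c := by
        simp [Polynomial.coe_C, PowerSeries.algebraMap_apply]
      rw [h1, AlgHom.commutes]
      simp [PowerSeries.algebraMap_apply, Algebra.commutes]
  | add p q hp hq =>
      rw [Polynomial.coe_add, map_add, map_add, map_add, add_mul, hp, hq]
      noncomm_ring
  | monomial n c ih =>
      have hc : ((Polynomial.C c * Polynomial.X ^ (n + 1) : Polynomial ℂ) : PowerSeries ℂ)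
          = X * ((Polynomial.C c * Polynomial.X ^ n : Polynomial ℂ) : PowerSeries ℂ) := by
        push_cast
        ring
      set T : PowerSeries ℂ := ((Polynomial.C c * Polynomial.X ^ n : Polynomial ℂ) : PowerSeries ℂ)
      have hd : d⁄dX ℂ (X * T) = X * (d⁄dX ℂ T) + T := by
        rw [Derivation.leibniz]
        simp [smul_eq_mul, mul_comm]
      rw [hc, hd, map_mul, map_add, map_mul]
      exact stmt3_aux (Φ X) b (Φ T) (Φ (d⁄dX ℂ T)) hrel ih

open PowerSeries in
/-- In the completed algebra `Â` (axiomatized: a topological `ℂ`-algebra `A` together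
with a `ℂ`-algebra morphism `Φ : ℂ[[X]] → A`, `T ↦ T(a)`, which is continuous in the
sense that the truncations of `T` evaluated at `a` converge to `T(a)`), if the element
`a := Φ X` satisfies `a*b = b*a + b^2`, then for every formal power series `T` one has
`T(a)·b = b·T(a) + b·T'(a)·b`. -/
theorem stmt3 {A : Type*} [Ring A] [Algebra ℂ A] [TopologicalSpace A]
    [IsTopologicalRing A] [T2Space A]
    (Φ : PowerSeries ℂ →ₐ[ℂ] A) (b : A)
    (hcont : ∀ T : PowerSeries ℂ,
      Filter.Tendsto (fun n : ℕ => Φ ((T.trunc n : Polynomial ℂ) : PowerSeries ℂ))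
        Filter.atTop (nhds (Φ T)))
    (hrel : Φ X * b = b * Φ X + b * b) :
    ∀ T : PowerSeries ℂ, Φ T * b = b * Φ T + b * Φ (d⁄dX ℂ T) * b := by
  intro T
  -- approximations
  have h1 : Filter.Tendsto (fun n : ℕ => Φ ((T.trunc (n + 1) : Polynomial ℂ) : PowerSeries ℂ))
      Filter.atTop (nhds (Φ T)) :=
    (hcont T).comp (Filter.tendsto_add_atTop_nat 1)
  have hderiv : ∀ n : ℕ, Φ (d⁄dX ℂ ((T.trunc (n + 1) : Polynomial ℂ) : PowerSeries ℂ))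
      = Φ (((d⁄dX ℂ T).trunc n : Polynomial ℂ) : PowerSeries ℂ) := by
    intro n
    rw [derivative_coe, ← trunc_derivative]
  have h2 : Filter.Tendsto
      (fun n : ℕ => Φ (d⁄dX ℂ ((T.trunc (n + 1) : Polynomial ℂ) : PowerSeries ℂ)))
      Filter.atTop (nhds (Φ (d⁄dX ℂ T))) := by
    simp only [hderiv]
    exact hcont (d⁄dX ℂ T)
  have hL : Filter.Tendsto
      (fun n : ℕ => Φ ((T.trunc (n + 1) : Polynomial ℂ) : PowerSeries ℂ) * b)
      Filter.atTop (nhds (Φ T * b)) := h1.mul tendsto_const_nhds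
  have hR : Filter.Tendsto
      (fun n : ℕ => b * Φ ((T.trunc (n + 1) : Polynomial ℂ) : PowerSeries ℂ)
        + b * Φ (d⁄dX ℂ ((T.trunc (n + 1) : Polynomial ℂ) : PowerSeries ℂ)) * b)
      Filter.atTop (nhds (b * Φ T + b * Φ (d⁄dX ℂ T) * b)) :=
    (tendsto_const_nhds.mul h1).add ((tendsto_const_nhds.mul h2).mul tendsto_const_nhds)
  have heq : (fun n : ℕ => Φ ((T.trunc (n + 1) : Polynomial ℂ) : PowerSeries ℂ) * b)
      = fun n : ℕ => b * Φ ((T.trunc (n + 1) : Polynomial ℂ) : PowerSeries ℂ)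
        + b * Φ (d⁄dX ℂ ((T.trunc (n + 1) : Polynomial ℂ) : PowerSeries ℂ)) * b := by
    funext n
    exact stmt3_poly Φ b hrel (T.trunc (n + 1))
  rw [heq] at hL
  exact tendsto_nhds_unique hL hR
end

section
/- The element 1 + a is not invertible in the algebra Ã of formal series Σ_ν P_ν(a)·b^ν with P_ν polynomials in ℂ[x] and relation a·b - b·a = b^2. -/
/- We realize the algebra `Ã` faithfully as an algebra of operators on `ℂ[[s]]`:
`a` acts as multiplication by `s` and `b` as integration from `0`
(so that `a∘b - b∘a = b∘b`, i.e. `a·b - b·a = b²`).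
An element `Σ_ν P_ν(a)·b^ν` of `Ã` (with `P_ν ∈ ℂ[x]`) is the operator `tildeA P`
defined coefficientwise below (the sum converges `b`-adically since `b^ν f` has
order `≥ ν`).  Invertibility of `1 + a` in `Ã` means existence of a two-sided
inverse that is again an operator of this form. -/

/-- The operator `b` : integration from `0` on `ℂ[[s]]`. -/
noncomputable def bOp : PowerSeries ℂ →ₗ[ℂ] PowerSeries ℂ where
  toFun f := PowerSeries.mk fun n =>
    if n = 0 then 0 else (n : ℂ)⁻¹ * PowerSeries.coeff (R := ℂ) (n - 1) f
  map_add' f g := by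
    ext n
    simp only [PowerSeries.coeff_mk, map_add]
    split <;> ring
  map_smul' c f := by
    ext n
    simp only [PowerSeries.coeff_mk, map_smul, RingHom.id_apply, smul_eq_mul]
    split <;> ring

/-- The operator `Σ_ν P_ν(a)·b^ν` on `ℂ[[s]]`, where `a` is multiplication by `s`. -/
noncomputable def tildeA (P : ℕ → Polynomial ℂ) : PowerSeries ℂ → PowerSeries ℂ :=
  fun f => PowerSeries.mk fun n => ∑ ν ∈ Finset.range (n + 1),
    PowerSeries.coeff (R := ℂ) n ((P ν : PowerSeries ℂ) * (bOp ^ ν) f)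

lemma tildeA_M (f : PowerSeries ℂ) :
    tildeA (fun ν => if ν = 0 then 1 + Polynomial.X else 0) f
      = (1 + PowerSeries.X) * f := by
  ext n
  rw [tildeA, PowerSeries.coeff_mk]
  rw [Finset.sum_eq_single 0]
  · simp [Polynomial.coe_add, Polynomial.coe_one, Polynomial.coe_X]
  · intro b _ hb
    simp [hb]
  · intro h
    simp at h

lemma bOp_X_pow (m : ℕ) :
    bOp ((PowerSeries.X : PowerSeries ℂ) ^ m) = (((m : ℂ) + 1))⁻¹ • PowerSeries.X ^ (m + 1) := by
  ext n
  simp only [bOp, LinearMap.coe_mk, AddHom.coe_mk, PowerSeries.coeff_mk, map_smul,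
    PowerSeries.coeff_X_pow, smul_eq_mul]
  rcases Nat.eq_zero_or_pos n with h | h
  · subst h; simp
  · have hn : n ≠ 0 := h.ne'
    simp only [hn, if_false]
    by_cases he : n = m + 1
    · subst he
      simp [Nat.add_sub_cancel]
    · have : n - 1 ≠ m := by omega
      simp [this, he]

lemma bOp_pow_X_pow (ν k : ℕ) :
    (bOp ^ ν) ((PowerSeries.X : PowerSeries ℂ) ^ k)
      = (∏ i ∈ Finset.Ioc k (k + ν), (i : ℂ))⁻¹ • PowerSeries.X ^ (k + ν) := by
  induction ν with
  | zero => simp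
  | succ ν ih =>
    rw [pow_succ', Module.End.mul_apply, ih, map_smul, bOp_X_pow, smul_smul,
      show k + (ν + 1) = (k + ν) + 1 from rfl,
      Finset.prod_Ioc_succ_top (by omega : k ≤ k + ν), mul_inv]
    congr 1
    push_cast; ring

lemma inv_series (k : ℕ) :
    (1 + PowerSeries.X) * PowerSeries.mk (fun n => if k ≤ n then (-1 : ℂ) ^ (n - k) else 0)
      = PowerSeries.X ^ k := by
  ext n
  rw [add_mul, one_mul, map_add, PowerSeries.coeff_X_pow]
  cases n with
  | zero =>
    rw [PowerSeries.coeff_zero_X_mul]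
    simp only [PowerSeries.coeff_mk, add_zero]
    by_cases hk : k = 0 <;> simp [hk, Nat.le_zero, eq_comm]
  | succ n =>
    rw [PowerSeries.coeff_succ_X_mul]
    simp only [PowerSeries.coeff_mk]
    rcases lt_trichotomy k (n + 1) with h | h | h
    · have h1 : k ≤ n + 1 := h.le
      have h2 : k ≤ n := by omega
      have h3 : ¬ (n + 1 = k) := by omega
      have h4 : n + 1 - k = (n - k) + 1 := by omega
      simp [h1, h2, h3, h4, pow_succ]
    · subst h
      simp [Nat.sub_self]
    · have h1 : ¬ (k ≤ n + 1) := by omega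
      have h2 : ¬ (k ≤ n) := by omega
      have h3 : ¬ (n + 1 = k) := by omega
      simp [h1, h2, h3]

lemma T_X_pow (Q : ℕ → Polynomial ℂ)
    (h : ∀ f, (1 + PowerSeries.X) * tildeA Q f = f) (k : ℕ) :
    tildeA Q (PowerSeries.X ^ k)
      = PowerSeries.mk (fun n => if k ≤ n then (-1 : ℂ) ^ (n - k) else 0) := by
  have hX : (1 + PowerSeries.X : PowerSeries ℂ) ≠ 0 := by
    intro hc
    have := congrArg (PowerSeries.coeff (R := ℂ) 0) hc
    simp at this
  apply mul_left_cancel₀ hX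
  rw [h, inv_series]

lemma key_eq (Q : ℕ → Polynomial ℂ)
    (h : ∀ f, (1 + PowerSeries.X) * tildeA Q f = f) (k m : ℕ) :
    ∑ ν ∈ Finset.range (m + 1),
      (Q ν).coeff (m - ν) * (∏ i ∈ Finset.Ioc k (k + ν), (i : ℂ))⁻¹ = (-1 : ℂ) ^ m := by
  have h1 := congrArg (PowerSeries.coeff (R := ℂ) (k + m)) (T_X_pow Q h k)
  rw [tildeA, PowerSeries.coeff_mk, PowerSeries.coeff_mk] at h1
  have h2 : (if k ≤ k + m then (-1 : ℂ) ^ (k + m - k) else 0) = (-1 : ℂ) ^ m := by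
    simp
  rw [h2] at h1
  rw [← h1]
  have hterm : ∀ ν, PowerSeries.coeff (R := ℂ) (k + m) (((Q ν) : PowerSeries ℂ) * (bOp ^ ν) (PowerSeries.X ^ k))
      = if ν ≤ m then (Q ν).coeff (m - ν) * (∏ i ∈ Finset.Ioc k (k + ν), (i : ℂ))⁻¹ else 0 := by
    intro ν
    rw [bOp_pow_X_pow, mul_smul_comm, map_smul, PowerSeries.coeff_mul_X_pow', smul_eq_mul]
    by_cases hν : ν ≤ m
    · have hle : k + ν ≤ k + m := by omega
      have : k + m - (k + ν) = m - ν := by omega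
      simp only [hle, if_true, this, Polynomial.coeff_coe, if_pos hν]
      ring
    · have hle : ¬ (k + ν ≤ k + m) := by omega
      simp [hle, hν]
  calc ∑ ν ∈ Finset.range (m + 1),
        (Q ν).coeff (m - ν) * (∏ i ∈ Finset.Ioc k (k + ν), (i : ℂ))⁻¹
      = ∑ ν ∈ Finset.range (m + 1), PowerSeries.coeff (R := ℂ) (k + m)
          (((Q ν) : PowerSeries ℂ) * (bOp ^ ν) (PowerSeries.X ^ k)) := by
        apply Finset.sum_congr rfl
        intro ν hν
        rw [hterm ν, if_pos (by simp at hν; omega)]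
    _ = ∑ ν ∈ Finset.range (k + m + 1), PowerSeries.coeff (R := ℂ) (k + m)
          (((Q ν) : PowerSeries ℂ) * (bOp ^ ν) (PowerSeries.X ^ k)) := by
        apply Finset.sum_subset
        · intro x hx; simp at hx ⊢; omega
        · intro x _ hx
          rw [hterm x, if_neg (by simp at hx; omega)]

lemma cast_prod_Ioc (k a b : ℕ) :
    ∏ i ∈ Finset.Ioc a b, ((k : ℂ) + i) = ∏ i ∈ Finset.Ioc (k + a) (k + b), (i : ℂ) := by
  rw [← Finset.map_add_left_Ioc, Finset.prod_map]
  simp [addLeftEmbedding]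

lemma prod_Ioc_ne_zero (a b : ℕ) : (∏ i ∈ Finset.Ioc a b, (i : ℂ)) ≠ 0 := by
  rw [Finset.prod_ne_zero_iff]
  intro i hi
  simp only [Finset.mem_Ioc] at hi
  exact Nat.cast_ne_zero.mpr (by omega)

lemma poly_step (c : ℕ → ℂ) (m : ℕ)
    (h : ∀ k : ℕ, ∑ ν ∈ Finset.range (m + 1),
        c ν * (∏ i ∈ Finset.Ioc k (k + ν), (i : ℂ))⁻¹ = (-1 : ℂ) ^ m) :
    c 0 = (-1 : ℂ) ^ m := by
  set p : Polynomial ℂ :=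
    (∑ ν ∈ Finset.range (m + 1), Polynomial.C (c ν) *
        ∏ i ∈ Finset.Ioc ν m, (Polynomial.X + Polynomial.C (i : ℂ)))
      - Polynomial.C ((-1 : ℂ) ^ m) *
        ∏ i ∈ Finset.Ioc 0 m, (Polynomial.X + Polynomial.C (i : ℂ)) with hp
  have hroot : ∀ k : ℕ, p.eval (k : ℂ) = 0 := by
    intro k
    have heval : p.eval (k : ℂ) =
        (∑ ν ∈ Finset.range (m + 1), c ν * ∏ i ∈ Finset.Ioc (k + ν) (k + m), (i : ℂ))
          - (-1 : ℂ) ^ m * ∏ i ∈ Finset.Ioc (k + 0) (k + m), (i : ℂ) := by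
      simp only [hp, Polynomial.eval_sub, Polynomial.eval_finset_sum, Polynomial.eval_mul,
        Polynomial.eval_C, Polynomial.eval_prod, Polynomial.eval_add, Polynomial.eval_X,
        cast_prod_Ioc]
    rw [heval, sub_eq_zero]
    have hkey := congrArg (· * ∏ i ∈ Finset.Ioc k (k + m), (i : ℂ)) (h k)
    simp only [Finset.sum_mul] at hkey
    rw [show k + 0 = k by ring]
    rw [← hkey]
    apply Finset.sum_congr rfl
    intro ν hν
    simp only [Finset.mem_range] at hν
    rw [mul_assoc]
    congr 1
    rw [← Finset.prod_Ioc_consecutive (fun i => (i : ℂ)) (by omega : k ≤ k + ν)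
      (by omega : k + ν ≤ k + m)]
    rw [inv_mul_cancel_left₀ (prod_Ioc_ne_zero k (k + ν))]
  have hp0 : p = 0 := by
    apply Polynomial.eq_zero_of_infinite_isRoot
    apply Set.infinite_of_injective_forall_mem (f := (Nat.cast : ℕ → ℂ)) Nat.cast_injective
    intro k
    exact hroot k
  have hmon : ∀ ν : ℕ, (∏ i ∈ Finset.Ioc ν m, (Polynomial.X + Polynomial.C (i : ℂ))).Monic :=
    fun ν => Polynomial.monic_prod_of_monic _ _ fun i _ => Polynomial.monic_X_add_C _
  have hdeg : ∀ ν : ℕ, (∏ i ∈ Finset.Ioc ν m, (Polynomial.X + Polynomial.C (i : ℂ))).natDegree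
      = m - ν := by
    intro ν
    rw [Polynomial.natDegree_prod_of_monic _ _ (fun i _ => Polynomial.monic_X_add_C _)]
    simp only [Polynomial.natDegree_X_add_C, Finset.sum_const, smul_eq_mul, mul_one, Nat.card_Ioc]
  have hc := congrArg (fun q => Polynomial.coeff q m) hp0
  simp only [hp, Polynomial.coeff_sub, Polynomial.finset_sum_coeff, Polynomial.coeff_C_mul,
    Polynomial.coeff_zero] at hc
  rw [Finset.sum_eq_single 0] at hc
  · have h0 : (∏ i ∈ Finset.Ioc 0 m, (Polynomial.X + Polynomial.C (i : ℂ))).coeff m = 1 := by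
      have := (hmon 0).coeff_natDegree
      rwa [hdeg 0, Nat.sub_zero] at this
    rw [h0, mul_one, mul_one, sub_eq_zero] at hc
    exact hc
  · intro ν hν hν0
    simp only [Finset.mem_range] at hν
    rw [Polynomial.coeff_eq_zero_of_natDegree_lt (by rw [hdeg]; omega), mul_zero]
  · intro hmem
    simp at hmem


/-- The element `1 + a` is not invertible in the algebra `Ã` of formal series
`Σ_ν P_ν(a)·b^ν` with polynomial coefficients `P_ν ∈ ℂ[x]` and relation
`a·b - b·a = b²`. -/
theorem stmt4 :
    ¬ ∃ Q : ℕ → Polynomial ℂ,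
      (tildeA (fun ν => if ν = 0 then 1 + Polynomial.X else 0)) ∘ (tildeA Q) = id ∧
      (tildeA Q) ∘ (tildeA (fun ν => if ν = 0 then 1 + Polynomial.X else 0)) = id := by
  rintro ⟨Q, h1, _⟩
  have h : ∀ f, (1 + PowerSeries.X) * tildeA Q f = f := by
    intro f
    have := congrFun h1 f
    simpa [Function.comp, tildeA_M] using this
  have hQ0 : ∀ m : ℕ, (Q 0).coeff m = (-1 : ℂ) ^ m := by
    intro m
    simpa using poly_step (fun ν => (Q ν).coeff (m - ν)) m (fun k => key_eq Q h k m)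
  have hm := hQ0 ((Q 0).natDegree + 1)
  rw [Polynomial.coeff_eq_zero_of_natDegree_lt (by omega)] at hm
  exact pow_ne_zero _ (by norm_num : (-1 : ℂ) ≠ 0) hm.symm
end

section
/- Let λ ∈ ℂ and consider the rank-2 (a,b)-module E with ℂ[[b]]-basis e_1, e_2 and relations a·e_2 = λ·b·e_2 and a·e_1 = λ·b·e_1 + b·e_2 + b^2·S(b)·e_1 + b^2·T(b)·e_2 for given S, T ∈ ℂ[[b]]. Then there exist U, V ∈ ℂ[[b]] such that ε_1 := (1 + b·U)·e_1 + b·V·e_2 and ε_2 := e_2 form a ℂ[[b]]-basis of E satisfying a·ε_1 = λ·b·ε_1 + b·ε_2 and a·ε_2 = λ·b·ε_2. -/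
open PowerSeries

noncomputable def uc (S : PowerSeries ℂ) : ℕ → ℂ
  | n => (-(PowerSeries.coeff n S)
      - ∑ j ∈ (Finset.range n).attach,
          PowerSeries.coeff j.1 S * uc S (n - 1 - j.1)) / (n + 1)
  decreasing_by
    have hj : j.1 < n := Finset.mem_range.mp j.2
    omega

lemma uc_spec (S : PowerSeries ℂ) (n : ℕ) :
    ((n : ℂ) + 1) * uc S n
      + ∑ j ∈ Finset.range n, PowerSeries.coeff j S * uc S (n - 1 - j)
      = -(PowerSeries.coeff n S) := by
  rw [uc]
  have hn : ((n : ℂ) + 1) ≠ 0 := Nat.cast_add_one_ne_zero n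
  rw [← Finset.sum_attach (Finset.range n) (fun j => PowerSeries.coeff j S * uc S (n - 1 - j))]
  field_simp
  ring

noncomputable def Usol (S : PowerSeries ℂ) : PowerSeries ℂ := PowerSeries.mk (uc S)

lemma keyU (S : PowerSeries ℂ) :
    (1 + X * S) * Usol S + X * d⁄dX ℂ (Usol S) = -S := by
  ext n
  rcases n with _ | n
  · have h0 := uc_spec S 0
    simp only [Finset.range_zero, Finset.sum_empty, add_zero, Nat.cast_zero, zero_add,
      one_mul] at h0
    simp [Usol, coeff_mk, mul_comm X, mul_assoc, h0]
  · rw [map_neg, add_mul, one_mul, map_add, map_add, mul_assoc, coeff_succ_X_mul,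
      coeff_succ_X_mul, coeff_derivative, coeff_mul]
    rw [Finset.Nat.sum_antidiagonal_eq_sum_range_succ_mk]
    simp only [Usol, coeff_mk]
    have := uc_spec S (n + 1)
    push_cast at this ⊢
    linear_combination this

/-- primitive with zero constant term, divided by X : `Vsol R` satisfies `d⁄dX (X * Vsol R) = R`. -/
noncomputable def Vsol (R : PowerSeries ℂ) : PowerSeries ℂ :=
  PowerSeries.mk fun n => PowerSeries.coeff n R / (n + 1)

lemma keyV (R : PowerSeries ℂ) : d⁄dX ℂ ((X : PowerSeries ℂ) * Vsol R) = R := by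
  ext n
  rw [coeff_derivative, coeff_succ_X_mul, Vsol, coeff_mk,
    div_mul_cancel₀ _ (Nat.cast_add_one_ne_zero n)]

/-- The rank-2 (a,b)-module with `ℂ[[b]]`-basis `e₁ = (1,0)`, `e₂ = (0,1)`,
relations `a·e₂ = λ·b·e₂`, `a·e₁ = λ·b·e₁ + b·e₂ + b²·S·e₁ + b²·T·e₂`, and the
Leibniz rule `a·(f·x) = f·(a·x) + b²·f'·x` (`b` acts by multiplication by `X`).
In coordinates `(f₁, f₂) = f₁·e₁ + f₂·e₂`. -/
noncomputable def aE (l : ℂ) (S T : PowerSeries ℂ)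
    (x : PowerSeries ℂ × PowerSeries ℂ) : PowerSeries ℂ × PowerSeries ℂ :=
  (l • ((X : PowerSeries ℂ) * x.1) + (X : PowerSeries ℂ) ^ 2 * S * x.1
      + (X : PowerSeries ℂ) ^ 2 * d⁄dX ℂ x.1,
   (X : PowerSeries ℂ) * x.1 + (X : PowerSeries ℂ) ^ 2 * T * x.1
      + l • ((X : PowerSeries ℂ) * x.2) + (X : PowerSeries ℂ) ^ 2 * d⁄dX ℂ x.2)

/-- There exist `U, V ∈ ℂ[[b]]` such that `ε₁ := (1 + b·U)·e₁ + b·V·e₂` and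
`ε₂ := e₂` form a `ℂ[[b]]`-basis of `E` with `a·ε₁ = λ·b·ε₁ + b·ε₂` and
`a·ε₂ = λ·b·ε₂`. -/
theorem stmt14 (l : ℂ) (S T : PowerSeries ℂ) :
    ∃ U V : PowerSeries ℂ,
      aE l S T (1 + X * U, X * V)
          = l • ((X : PowerSeries ℂ) • ((1 + X * U, X * V) : PowerSeries ℂ × PowerSeries ℂ))
            + (X : PowerSeries ℂ) • ((0, 1) : PowerSeries ℂ × PowerSeries ℂ) ∧
      aE l S T (0, 1)
          = l • ((X : PowerSeries ℂ) • ((0, 1) : PowerSeries ℂ × PowerSeries ℂ)) ∧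
      Function.Bijective (fun p : PowerSeries ℂ × PowerSeries ℂ =>
        p.1 • ((1 + X * U, X * V) : PowerSeries ℂ × PowerSeries ℂ)
          + p.2 • ((0, 1) : PowerSeries ℂ × PowerSeries ℂ)) := by
  set U := Usol S with hU
  set V := Vsol (-(U + T * (1 + X * U))) with hV
  have hdU : d⁄dX ℂ ((1 : PowerSeries ℂ) + X * U) = U + X * d⁄dX ℂ U := by
    rw [map_add, Derivation.leibniz, derivative_X]
    simp only [map_one, smul_eq_mul, mul_one, Derivation.map_one_eq_zero, zero_add]
    ring
  have hkU := keyU S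
  have hkV : d⁄dX ℂ ((X : PowerSeries ℂ) * V) = -(U + T * (1 + X * U)) := keyV _
  refine ⟨U, V, ?_, ?_, ?_⟩
  · refine Prod.ext ?_ ?_
    · show l • ((X : PowerSeries ℂ) * (1 + X * U)) + X ^ 2 * S * (1 + X * U)
          + X ^ 2 * d⁄dX ℂ (1 + X * U)
          = l • ((X : PowerSeries ℂ) * (1 + X * U)) + X • (0 : PowerSeries ℂ)
      rw [hdU, smul_eq_C_mul, smul_eq_mul]
      linear_combination (X : PowerSeries ℂ) ^ 2 * hkU
    · show (X : PowerSeries ℂ) * (1 + X * U) + X ^ 2 * T * (1 + X * U)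
          + l • ((X : PowerSeries ℂ) * (X * V)) + X ^ 2 * d⁄dX ℂ (X * V)
          = l • ((X : PowerSeries ℂ) * (X * V)) + X • (1 : PowerSeries ℂ)
      rw [hkV, smul_eq_C_mul, smul_eq_mul]
      ring
  · refine Prod.ext ?_ ?_
    · show l • ((X : PowerSeries ℂ) * 0) + X ^ 2 * S * 0 + X ^ 2 * d⁄dX ℂ (0 : PowerSeries ℂ)
          = l • ((X : PowerSeries ℂ) • (0 : PowerSeries ℂ))
      simp
    · show (X : PowerSeries ℂ) * 0 + X ^ 2 * T * 0 + l • ((X : PowerSeries ℂ) * 1)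
          + X ^ 2 * d⁄dX ℂ (1 : PowerSeries ℂ)
          = l • ((X : PowerSeries ℂ) • (1 : PowerSeries ℂ))
      simp [smul_eq_mul]
  · have hc : constantCoeff ((1 : PowerSeries ℂ) + X * U) ≠ 0 := by
      simp
    set w := ((1 : PowerSeries ℂ) + X * U)⁻¹ with hw
    have hmul : ((1 : PowerSeries ℂ) + X * U) * w = 1 := by
      rw [hw, PowerSeries.mul_inv_cancel _ hc]
    refine Function.bijective_iff_has_inverse.mpr
      ⟨fun q => (q.1 * w, q.2 - q.1 * w * (X * V)), fun p => ?_, fun q => ?_⟩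
    · refine Prod.ext ?_ ?_
      · show (p.1 • ((1 : PowerSeries ℂ) + X * U) + p.2 • (0 : PowerSeries ℂ)) * w = p.1
        rw [smul_eq_mul, smul_eq_mul]
        linear_combination p.1 * hmul
      · show p.1 • ((X : PowerSeries ℂ) * V) + p.2 • (1 : PowerSeries ℂ)
            - (p.1 • ((1 : PowerSeries ℂ) + X * U) + p.2 • (0 : PowerSeries ℂ)) * w * (X * V)
            = p.2
        simp only [smul_eq_mul]
        linear_combination (-(p.1 * (X * V))) * hmul
    · refine Prod.ext ?_ ?_
      · show (q.1 * w) • ((1 : PowerSeries ℂ) + X * U)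
            + (q.2 - q.1 * w * (X * V)) • (0 : PowerSeries ℂ) = q.1
        simp only [smul_eq_mul]
        linear_combination q.1 * hmul
      · show (q.1 * w) • ((X : PowerSeries ℂ) * V)
            + (q.2 - q.1 * w * (X * V)) • (1 : PowerSeries ℂ) = q.2
        simp only [smul_eq_mul]
        ring
end

section
/- Let λ ∈ ℂ with λ ∉ -ℕ and p ≥ 1 an integer. In the module Ξ_λ^{(1)} consider φ := s^{λ+p-2}·Log s + S(b)·s^{λ-2} where S ∈ ℂ[[b]] with S(0) ≠ 0. Then (a - (λ+p-1)·b)·φ = [b·S'(b) - p·S(b) + ρ·b^p]·(s^{λ-1}/(λ-1)), where ρ := (λ+p-2)(λ+p-3)⋯(λ-1) = Γ(λ+p-1)/Γ(λ-1), and hence (a - λ·b)·T(b)^{-1}·(a - (λ+p-1)·b)·φ = 0 with T(b) := b·S'(b) - p·S(b) + ρ·b^p, T(0) = -p·S(0) ≠ 0. -/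
open PowerSeries

/-- The rank-2 module with `ℂ[[b]]`-basis `ε₁ := s^{λ+p-2}·Log s` and
`ε₀ := s^{λ-2}` (coordinates in that order), with
`a·ε₀ = (λ-1)·b·ε₀`, `a·ε₁ = (λ+p-1)·b·ε₁ + b·s^{λ+p-2}` where
`s^{λ+p-2} = ((λ-1)·λ⋯(λ+p-2))·b^p·s^{λ-2}` (since `b·s^{μ-1} = s^μ/μ`), and the
Leibniz rule `a·(f·x) = f·(a·x) + b²·f'·x` (`b` = multiplication by `X`). -/
noncomputable def aTh (l : ℂ) (p : ℕ) (x : PowerSeries ℂ × PowerSeries ℂ) :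
    PowerSeries ℂ × PowerSeries ℂ :=
  ((l + p - 1) • ((X : PowerSeries ℂ) * x.1) + (X : PowerSeries ℂ) ^ 2 * d⁄dX ℂ x.1,
   (l - 1) • ((X : PowerSeries ℂ) * x.2) + (X : PowerSeries ℂ) ^ 2 * d⁄dX ℂ x.2
      + (∏ j ∈ Finset.range p, (l - 1 + j)) • ((X : PowerSeries ℂ) ^ (p + 1) * x.1))

/-- Let `λ ∉ -ℕ`, `p ≥ 1`, and `φ := s^{λ+p-2}·Log s + S(b)·s^{λ-2}` with `S(0) ≠ 0`.
Then `(a - (λ+p-1)·b)·φ = [b·S' - p·S + ρ·b^p]·(s^{λ-1}/(λ-1))` with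
`ρ = (λ-1)·λ⋯(λ+p-2) = Γ(λ+p-1)/Γ(λ-1)` (note `s^{λ-1}/(λ-1) = b·s^{λ-2}`);
moreover `T := b·S' - p·S + ρ·b^p` satisfies `T(0) = -p·S(0) ≠ 0` and
`(a - λ·b)·(T(b)⁻¹·(a - (λ+p-1)·b)·φ) = 0`. -/
theorem stmt17 (l : ℂ) (hl : ∀ n : ℕ, l ≠ -(n : ℂ)) (p : ℕ) (hp : 1 ≤ p)
    (S : PowerSeries ℂ) (hS : constantCoeff S ≠ 0) :
    ∀ ρ : ℂ, ρ = ∏ j ∈ Finset.range p, (l - 1 + (j : ℂ)) →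
    ∀ T : PowerSeries ℂ, T = X * d⁄dX ℂ S - (p : ℂ) • S + ρ • (X : PowerSeries ℂ) ^ p →
      (aTh l p ((1, S) : PowerSeries ℂ × PowerSeries ℂ)
          - (l + p - 1) • ((X : PowerSeries ℂ) • ((1, S) : PowerSeries ℂ × PowerSeries ℂ))
        = ((0 : PowerSeries ℂ), (X : PowerSeries ℂ) * T)) ∧
      constantCoeff T = -(p : ℂ) * constantCoeff S ∧
      ∀ Tinv : PowerSeries ℂ, T * Tinv = 1 →
        aTh l p (Tinv • (((0 : PowerSeries ℂ), (X : PowerSeries ℂ) * T) :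
            PowerSeries ℂ × PowerSeries ℂ))
          = l • ((X : PowerSeries ℂ) •
              (Tinv • (((0 : PowerSeries ℂ), (X : PowerSeries ℂ) * T) :
                PowerSeries ℂ × PowerSeries ℂ))) := by
  intro ρ hρ T hT
  refine ⟨?_, ?_, ?_⟩
  · ext1
    · simp [aTh, Prod.smul_def, smul_eq_mul]
    · simp only [aTh, Prod.smul_def, smul_eq_mul, Prod.snd_sub, hT, hρ, smul_eq_C_mul, map_sub,
        map_add, map_natCast]
      ring
  · subst hT
    have h1 : constantCoeff ((X : PowerSeries ℂ) ^ p) = 0 := by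
      rw [map_pow, constantCoeff_X, zero_pow (by omega)]
    simp [smul_eq_C_mul, h1]
  · intro Tinv hTinv
    have hx : Tinv • ((X : PowerSeries ℂ) * T) = X := by
      rw [smul_eq_mul, mul_left_comm, mul_comm Tinv T, hTinv, mul_one]
    have h2 : Tinv • (((0 : PowerSeries ℂ), (X : PowerSeries ℂ) * T) :
        PowerSeries ℂ × PowerSeries ℂ) = (0, X) := by
      rw [Prod.smul_def, hx]; simp
    rw [h2]
    ext1
    · simp [aTh]
    · simp only [aTh, Prod.smul_def, smul_eq_mul, smul_eq_C_mul, map_sub, map_add,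
        map_natCast, map_one, derivative_X]
      simp
      ring
end
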